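/- arXiv:0905.2674 — 2 statements merged into one kernel-verified Lean document; each statement's English description precedes it below -/
import Mathlib

section
/- Let G be a finite p-group of conjugate rank 1 (all non-central elements of G have the same conjugacy class size). Then G is flat (i.e., [x, G] is a subgroup of G for every x ∈ G) if and only if the nilpotency class of G equals 2. -/
/-- The size of the conjugacy class of `x` in `G`. -/
noncomputable def classCard {G : Type*} [Group G] (x : G) : ℕ := Nat.card (conjugatesOf x)

/-- An element `x` is *small* if its conjugacy class size is among the two smallest
conjugacy class sizes of `G`, i.e. at most one conjugacy class size is strictly
smaller than that of `x`. -/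
def IsSmall {G : Type*} [Group G] (x : G) : Prop :=
  {n : ℕ | (∃ g : G, classCard g = n) ∧ n < classCard x}.Subsingleton

/-- `M G` is the subgroup generated by all small elements of `G`. -/
def smallGen (G : Type*) [Group G] : Subgroup G := Subgroup.closure {x : G | IsSmall x}

/-- `[x, K] = {x⁻¹k⁻¹xk : k ∈ K}`. -/
def commSet {G : Type*} [Group G] (x : G) (K : Set G) : Set G :=
  {y | ∃ k ∈ K, y = x⁻¹ * k⁻¹ * x * k}

/-- `[A, x] = {a⁻¹x⁻¹ax : a ∈ A}`. -/
def commSet' {G : Type*} [Group G] (A : Set G) (x : G) : Set G :=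
  {y | ∃ a ∈ A, y = a⁻¹ * x⁻¹ * a * x}

/-- `S` is a normal subset of `K`: `k⁻¹Sk = S` for all `k ∈ K`. -/
def IsNormalSubsetOf {G : Type*} [Group G] (S K : Set G) : Prop :=
  ∀ k ∈ K, (fun s => k⁻¹ * s * k) '' S = S

/-- The Fitting subgroup: the join of all nilpotent normal subgroups (for a finite
group, its largest nilpotent normal subgroup). -/
def fittingSubgroup (G : Type*) [Group G] : Subgroup G :=
  ⨆ H ∈ {H : Subgroup G | H.Normal ∧ Group.IsNilpotent ↥H}, H

section Aux

variable {G : Type*} [Group G]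

lemma mem_conjugatesOf_iff' {a b : G} : b ∈ conjugatesOf a ↔ IsConj a b := Iff.rfl

lemma commSet_univ_eq (x : G) :
    commSet x Set.univ = (fun y => x⁻¹ * y) '' conjugatesOf x := by
  ext y
  constructor
  · rintro ⟨k, -, rfl⟩
    refine ⟨k⁻¹ * x * k, ?_, by group⟩
    exact isConj_iff.mpr ⟨k⁻¹, by group⟩
  · rintro ⟨z, hz, rfl⟩
    obtain ⟨c, hc⟩ := isConj_iff.mp hz
    refine ⟨c⁻¹, Set.mem_univ _, ?_⟩
    rw [← hc]; group

lemma classCard_eq_ncard (x : G) : classCard x = (commSet x Set.univ).ncard := by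
  rw [commSet_univ_eq, Set.ncard_image_of_injective _ (mul_right_injective x⁻¹),
    classCard, Nat.card_coe_set_eq]

lemma coset_self (H : Subgroup G) {k : G} (hk : k ∈ H) :
    (fun u => k * u) '' (H : Set G) = (H : Set G) := by
  ext u
  constructor
  · rintro ⟨h, hh, rfl⟩; exact H.mul_mem hk hh
  · intro hu; exact ⟨k⁻¹ * u, H.mul_mem (H.inv_mem hk) hu, by group⟩

lemma key_center [Finite G]
    (hflat : ∀ x : G, ∃ H : Subgroup G, commSet x Set.univ = (H : Set G))
    (hrank : ∀ x y : G, x ∉ Subgroup.center G → y ∉ Subgroup.center G →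
      classCard x = classCard y)
    (x : G) : commSet x Set.univ ⊆ (Subgroup.center G : Set G) := by
  by_cases hx : x ∈ Subgroup.center G
  · rintro y ⟨g, -, rfl⟩
    have h := Subgroup.mem_center_iff.mp hx g⁻¹
    have h1 : x⁻¹ * g⁻¹ * x * g = 1 := by
      rw [mul_assoc x⁻¹, h]; group
    rw [h1]; exact (Subgroup.center G).one_mem
  · obtain ⟨H, hH⟩ := hflat x
    have hCx : (fun y => x * y) '' commSet x Set.univ = conjugatesOf x := by
      rw [commSet_univ_eq, Set.image_image]
      simp
    have L3 : ∀ y ∈ conjugatesOf x, commSet y Set.univ = commSet x Set.univ := by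
      intro y hy
      have hkH : x⁻¹ * y ∈ H := by
        rw [← SetLike.mem_coe, ← hH, commSet_univ_eq]
        exact ⟨y, hy, rfl⟩
      calc commSet y Set.univ = (fun t => y⁻¹ * t) '' conjugatesOf y := commSet_univ_eq y
        _ = (fun t => y⁻¹ * t) '' conjugatesOf x := by
              rw [(mem_conjugatesOf_iff'.mp hy).conjugatesOf_eq]
        _ = (fun t => y⁻¹ * t) '' ((fun t => x * t) '' commSet x Set.univ) := by rw [hCx]
        _ = (fun t => (x⁻¹ * y)⁻¹ * t) '' commSet x Set.univ := by
              rw [Set.image_image]; funext t; group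
        _ = commSet x Set.univ := by
              rw [hH]; exact coset_self H (H.inv_mem hkH)
    have L4 : ∀ k ∈ commSet x Set.univ, ∀ c : G, c⁻¹ * k * c ∈ commSet x Set.univ := by
      intro k hk c
      rw [commSet_univ_eq] at hk
      obtain ⟨w, hw, rfl⟩ := hk
      have hy : (c⁻¹ * x * c) ∈ conjugatesOf x := isConj_iff.mpr ⟨c⁻¹, by group⟩
      have hwc : (c⁻¹ * w * c) ∈ conjugatesOf (c⁻¹ * x * c) := by
        rw [← (mem_conjugatesOf_iff'.mp hy).conjugatesOf_eq]
        exact (mem_conjugatesOf_iff'.mp hw).trans (isConj_iff.mpr ⟨c⁻¹, by group⟩)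
      rw [← L3 _ hy, commSet_univ_eq]
      exact ⟨c⁻¹ * w * c, hwc, by group⟩
    intro k hk
    by_contra hkc
    have hkH : k ∈ H := by rw [← SetLike.mem_coe, ← hH]; exact hk
    have hsub : commSet k Set.univ ⊆ commSet x Set.univ := by
      rw [commSet_univ_eq k]
      rintro y ⟨w, hw, rfl⟩
      obtain ⟨c, hc⟩ := isConj_iff.mp (mem_conjugatesOf_iff'.mp hw)
      have hw' : w = (c⁻¹)⁻¹ * k * c⁻¹ := by rw [← hc]; group
      have hwS : w ∈ commSet x Set.univ := by rw [hw']; exact L4 k hk c⁻¹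
      have hwH : w ∈ H := by rw [← SetLike.mem_coe, ← hH]; exact hwS
      have : k⁻¹ * w ∈ H := H.mul_mem (H.inv_mem hkH) hwH
      rw [← SetLike.mem_coe, ← hH] at this
      exact this
    have hcard : (commSet x Set.univ).ncard ≤ (commSet k Set.univ).ncard := by
      rw [← classCard_eq_ncard, ← classCard_eq_ncard]
      exact le_of_eq (hrank x k hx hkc)
    have heq : commSet k Set.univ = commSet x Set.univ :=
      Set.eq_of_subset_of_ncard_le hsub hcard (Set.toFinite _)
    have hki : k⁻¹ ∈ commSet k Set.univ := by
      rw [heq, hH]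
      exact SetLike.mem_coe.mpr (H.inv_mem hkH)
    rw [commSet_univ_eq] at hki
    obtain ⟨w, hw, hwe⟩ := hki
    have hw1 : w = 1 := by
      have h3 : k⁻¹ * w = k⁻¹ * 1 := by rw [mul_one]; exact hwe
      exact mul_left_cancel h3
    rw [hw1] at hw
    obtain ⟨c, hc⟩ := isConj_iff.mp (mem_conjugatesOf_iff'.mp hw)
    have hk1 : k = 1 := by
      have h2 : k = c⁻¹ * (c * k * c⁻¹) * c := by group
      rw [hc] at h2
      simpa using h2
    exact hkc (hk1 ▸ (Subgroup.center G).one_mem)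

end Aux

open scoped commutatorElement

/-- A finite `p`-group of conjugate rank `1` is flat (every `[x, G]` is a subgroup)
if and only if its nilpotency class equals `2`. -/
theorem stmt_11 {G : Type*} [Group G] [Finite G] {p : ℕ} [Fact p.Prime]
    (hp : IsPGroup p G) (hna : ∃ a b : G, a * b ≠ b * a)
    (hrank : ∀ x y : G, x ∉ Subgroup.center G → y ∉ Subgroup.center G →
      classCard x = classCard y) :
    (∀ x : G, ∃ H : Subgroup G, commSet x Set.univ = (H : Set G)) ↔
    ((⊤ : Subgroup G).lowerCentralSeries 2 = ⊥ ∧ (⊤ : Subgroup G).lowerCentralSeries 1 ≠ ⊥) := by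
  have hlcs1 : (⊤ : Subgroup G).lowerCentralSeries 1 = ⁅(⊤ : Subgroup G), (⊤ : Subgroup G)⁆ := by
    have h := Subgroup.lowerCentralSeries_succ (⊤ : Subgroup G) 0
    rwa [Subgroup.lowerCentralSeries_zero] at h
  have hlcs2 : (⊤ : Subgroup G).lowerCentralSeries 2 = ⁅(⊤ : Subgroup G).lowerCentralSeries 1, (⊤ : Subgroup G)⁆ :=
    Subgroup.lowerCentralSeries_succ (⊤ : Subgroup G) 1
  have hne : (⊤ : Subgroup G).lowerCentralSeries 1 ≠ ⊥ := by
    obtain ⟨a, b, hab⟩ := hna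
    intro h
    apply hab
    have hm : ⁅a, b⁆ ∈ (⊤ : Subgroup G).lowerCentralSeries 1 := by
      rw [hlcs1]
      exact Subgroup.commutator_mem_commutator (Subgroup.mem_top a) (Subgroup.mem_top b)
    rw [h, Subgroup.mem_bot, commutatorElement_eq_one_iff_commute] at hm
    exact hm
  constructor
  · intro hflat
    refine ⟨?_, hne⟩
    have hcent : ∀ a b : G, ⁅a, b⁆ ∈ Subgroup.center G := by
      intro a b
      have h := key_center hflat hrank a⁻¹
      have hmem : ⁅a, b⁆ ∈ commSet a⁻¹ Set.univ := by
        refine ⟨b⁻¹, Set.mem_univ _, ?_⟩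
        rw [commutatorElement_def]; group
      exact h hmem
    have h1c : (⊤ : Subgroup G).lowerCentralSeries 1 ≤ Subgroup.center G := by
      rw [hlcs1, Subgroup.commutator_le]
      intro c _ d _
      exact hcent c d
    rw [hlcs2, eq_bot_iff, Subgroup.commutator_le]
    intro a ha b _
    rw [Subgroup.mem_bot, commutatorElement_eq_one_iff_commute]
    exact (Subgroup.mem_center_iff.mp (h1c ha) b).symm
  · rintro ⟨h2, -⟩ x
    have hcent : ∀ a b : G, ⁅a, b⁆ ∈ Subgroup.center G := by
      intro a b
      rw [Subgroup.mem_center_iff]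
      intro g
      have hab : ⁅a, b⁆ ∈ (⊤ : Subgroup G).lowerCentralSeries 1 := by
        rw [hlcs1]
        exact Subgroup.commutator_mem_commutator (Subgroup.mem_top a) (Subgroup.mem_top b)
      have hg : ⁅⁅a, b⁆, g⁆ ∈ (⊤ : Subgroup G).lowerCentralSeries 2 := by
        rw [hlcs2]
        exact Subgroup.commutator_mem_commutator hab (Subgroup.mem_top g)
      rw [h2, Subgroup.mem_bot, commutatorElement_eq_one_iff_commute] at hg
      exact hg.symm
    have hc' : ∀ g : G, ∀ z : G, z * (x⁻¹ * g⁻¹ * x * g) = (x⁻¹ * g⁻¹ * x * g) * z := by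
      intro g z
      have h0 := Subgroup.mem_center_iff.mp (hcent x⁻¹ g⁻¹) z
      rwa [commutatorElement_def, inv_inv, inv_inv] at h0
    have hcinv : ∀ g : G, ∀ z : G,
        z * (x⁻¹ * g⁻¹ * x * g)⁻¹ = (x⁻¹ * g⁻¹ * x * g)⁻¹ * z := by
      intro g z
      calc z * (x⁻¹ * g⁻¹ * x * g)⁻¹
          = (x⁻¹ * g⁻¹ * x * g)⁻¹ * ((x⁻¹ * g⁻¹ * x * g) * z) * (x⁻¹ * g⁻¹ * x * g)⁻¹ := by
            group
        _ = (x⁻¹ * g⁻¹ * x * g)⁻¹ * (z * (x⁻¹ * g⁻¹ * x * g)) * (x⁻¹ * g⁻¹ * x * g)⁻¹ := by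
            rw [← hc' g z]
        _ = (x⁻¹ * g⁻¹ * x * g)⁻¹ * z := by group
    refine ⟨{ carrier := commSet x Set.univ,
              one_mem' := ⟨1, Set.mem_univ _, by group⟩,
              mul_mem' := ?_, inv_mem' := ?_ }, rfl⟩
    · rintro a b ⟨g, -, rfl⟩ ⟨h, -, rfl⟩
      refine ⟨g * h, Set.mem_univ _, ?_⟩
      have swap : h⁻¹ * (x⁻¹ * g⁻¹ * x * g) * h = x⁻¹ * g⁻¹ * x * g := by
        rw [mul_assoc, ← hc' g h, ← mul_assoc, inv_mul_cancel, one_mul]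
      symm
      calc x⁻¹ * (g * h)⁻¹ * x * (g * h)
          = (x⁻¹ * h⁻¹ * x * h) * (h⁻¹ * (x⁻¹ * g⁻¹ * x * g) * h) := by group
        _ = (x⁻¹ * h⁻¹ * x * h) * (x⁻¹ * g⁻¹ * x * g) := by rw [swap]
        _ = (x⁻¹ * g⁻¹ * x * g) * (x⁻¹ * h⁻¹ * x * h) := hc' g _
    · rintro a ⟨g, -, rfl⟩
      refine ⟨g⁻¹, Set.mem_univ _, ?_⟩
      symm
      calc x⁻¹ * (g⁻¹)⁻¹ * x * g⁻¹
          = g * (x⁻¹ * g⁻¹ * x * g)⁻¹ * g⁻¹ := by group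
        _ = (x⁻¹ * g⁻¹ * x * g)⁻¹ * g * g⁻¹ := by rw [hcinv g g]
        _ = (x⁻¹ * g⁻¹ * x * g)⁻¹ := by group
end

section
/- Let G be a finite group of conjugate rank 1 (all non-central elements have the same conjugacy class size) and let x ∈ G be a non-central element such that [x, G] is a normal subset of G. Then [x, G] ⊆ Z(G). -/
/-- In a finite group of conjugate rank `1`, if `x` is non-central and `[x, G]` is a
normal subset of `G`, then `[x, G] ⊆ Z(G)`. -/
theorem stmt_12 {G : Type*} [Group G] [Finite G]
    (hna : ∃ a b : G, a * b ≠ b * a)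
    (hrank : ∀ x y : G, x ∉ Subgroup.center G → y ∉ Subgroup.center G →
      classCard x = classCard y)
    (x : G) (hx : x ∉ Subgroup.center G)
    (hns : IsNormalSubsetOf (commSet x Set.univ) Set.univ) :
    commSet x Set.univ ⊆ (Subgroup.center G : Set G) := by
  intro c hc
  by_contra hcz
  -- `[x,G]` is the image of the conjugacy class of `x` under left mult. by `x⁻¹`
  have himg : commSet x Set.univ = (fun y => x⁻¹ * y) '' conjugatesOf x := by
    ext y
    constructor
    · rintro ⟨g, -, rfl⟩
      exact ⟨g⁻¹ * x * g, isConj_iff.mpr ⟨g⁻¹, by group⟩, by group⟩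
    · rintro ⟨z, hz, rfl⟩
      obtain ⟨g, rfl⟩ := isConj_iff.mp hz
      exact ⟨g⁻¹, trivial, by group⟩
  have hcard : (commSet x Set.univ).ncard = classCard x := by
    rw [himg, Set.ncard_image_of_injective _ (mul_right_injective x⁻¹)]
    simp [classCard, Nat.card_coe_set_eq]
  -- the conjugacy class of `c` is contained in `[x,G]`
  have hsub : conjugatesOf c ⊆ commSet x Set.univ := by
    intro y hy
    obtain ⟨k, rfl⟩ := isConj_iff.mp hy
    have := hns k⁻¹ trivial
    rw [← this]
    exact ⟨c, hc, by group⟩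
  have hccard : (conjugatesOf c).ncard = (commSet x Set.univ).ncard := by
    rw [hcard, ← Nat.card_coe_set_eq]
    exact hrank c x hcz hx
  have heq : conjugatesOf c = commSet x Set.univ :=
    Set.eq_of_subset_of_ncard_le hsub hccard.ge (Set.toFinite _)
  have h1 : (1 : G) ∈ conjugatesOf c := by
    rw [heq]; exact ⟨1, trivial, by group⟩
  have : c = 1 := by
    have : IsConj c 1 := h1
    obtain ⟨g, hg⟩ := isConj_iff.mp this.symm
    simpa using hg.symm
  exact hcz (this ▸ (Subgroup.center G).one_mem)
end
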